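/- Let A be an automorphism of the binary rooted tree given by a finite Mealy automaton, which has bounded activity and acts transitively on all levels. Then the set T_A = { A^n|_w : w a finite word, 0 ≤ n ≤ 2^{|w|} } of sections of powers of A is finite. -/

import Mathlib

/-- A (level-preserving, adjacency-preserving) endomorphism of the rooted tree `X*`. -/
def IsEndo {X : Type*} (f : List X → List X) : Prop :=
  (∀ w, (f w).length = w.length) ∧ ∀ w a, ∃ b, f (w ++ [a]) = f w ++ [b]

/-- The section of `g` at the word `w`: the unique `h` with `g (w ++ v) = g w ++ h v`. -/
def sec {X : Type*} (g : List X → List X) (w v : List X) : List X :=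
  (g (w ++ v)).drop w.length

lemma endo_prefix {X : Type*} {g : List X → List X} (hg : IsEndo g) (w v : List X) :
    g (w ++ v) = g w ++ sec g w v := by
  induction v using List.reverseRecOn with
  | nil =>
    have h := hg.1 w
    simp only [sec, List.append_nil]
    rw [← h, List.drop_length, List.append_nil]
  | append_singleton v a ih =>
    obtain ⟨b, hb⟩ := hg.2 (w ++ v) a
    have hlen : (g w).length = w.length := hg.1 w
    have key : g (w ++ (v ++ [a])) = (g w ++ sec g w v) ++ [b] := by
      rw [← List.append_assoc, hb, ih]
    have hsec : sec g w (v ++ [a]) = sec g w v ++ [b] := by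
      show (g (w ++ (v ++ [a]))).drop w.length = _
      rw [key, List.append_assoc, List.drop_left' hlen]
    rw [key, hsec, List.append_assoc]

lemma sec_comp {X : Type*} {f g : List X → List X} (hf : IsEndo f) (hg : IsEndo g)
    (w : List X) : sec (f ∘ g) w = sec f (g w) ∘ sec g w := by
  funext v
  have h1 : g (w ++ v) = g w ++ sec g w v := endo_prefix hg w v
  have h2 : f (g w ++ sec g w v) = f (g w) ++ sec f (g w) (sec g w v) :=
    endo_prefix hf (g w) (sec g w v)
  have hlen : (f (g w)).length = w.length := by rw [hf.1, hg.1]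
  show (f (g (w ++ v))).drop w.length = sec f (g w) (sec g w v)
  rw [h1, h2, List.drop_left' hlen]

lemma endo_comp {X : Type*} {f g : List X → List X} (hf : IsEndo f) (hg : IsEndo g) :
    IsEndo (f ∘ g) := by
  refine ⟨fun w => by rw [Function.comp_apply, hf.1, hg.1], fun w a => ?_⟩
  obtain ⟨b, hb⟩ := hg.2 w a
  obtain ⟨b', hb'⟩ := hf.2 (g w) b
  exact ⟨b', by rw [Function.comp_apply, hb, hb', Function.comp_apply]⟩

lemma endo_id {X : Type*} : IsEndo (id : List X → List X) := ⟨fun _ => rfl, fun w a => ⟨a, rfl⟩⟩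

lemma endo_iterate {X : Type*} {f : List X → List X} (hf : IsEndo f) (n : ℕ) :
    IsEndo (f^[n]) := by
  induction n with
  | zero => exact endo_id
  | succ n ih => rw [Function.iterate_succ']; exact endo_comp hf ih

lemma sec_id {X : Type*} (w : List X) : sec (id : List X → List X) w = id := by
  funext v; simp [sec, List.drop_left]

lemma sec_iterate {X : Type*} {f : List X → List X} (hf : IsEndo f) (n : ℕ) (w : List X) :
    sec (f^[n]) w =
      ((List.range n).map (fun i => sec f (f^[i] w))).foldl (fun g h => h ∘ g) id := by
  induction n with
  | zero => simpa using sec_id w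
  | succ n ih =>
    rw [List.range_succ, List.map_append, List.foldl_append, ← ih]
    have : f^[n+1] = f ∘ f^[n] := Function.iterate_succ' f n
    rw [this, sec_comp hf (endo_iterate hf n)]
    simp

lemma foldl_filter {α : Type*} (q : (α → α) → Bool) (hq : ∀ f, q f = false → f = id)
    (L : List (α → α)) : ∀ g : α → α,
    (L.filter q).foldl (fun g h => h ∘ g) g = L.foldl (fun g h => h ∘ g) g := by
  induction L with
  | nil => intro g; rfl
  | cons x L ih =>
    intro g
    rw [List.filter_cons]
    by_cases hx : q x = true
    · rw [if_pos hx, List.foldl_cons, List.foldl_cons, ih]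
    · have hxid : x = id := hq x (by simpa using hx)
      rw [if_neg hx, List.foldl_cons, ih, hxid, Function.id_comp]

lemma length_le_ncard {α : Type*} {l : List α} {s : Set α} (hn : l.Nodup)
    (hs : s.Finite) (hm : ∀ x ∈ l, x ∈ s) : l.length ≤ s.ncard := by
  classical
  calc l.length = l.toFinset.card := (List.toFinset_card_of_nodup hn).symm
    _ ≤ hs.toFinset.card := by
        refine Finset.card_le_card fun x hx => ?_
        rw [Set.Finite.mem_toFinset]
        exact hm x (List.mem_toFinset.mp hx)
    _ = s.ncard := (Set.ncard_eq_toFinset_card s hs).symm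

lemma ncard_level (m : ℕ) : ({v : List Bool | v.length = m} : Set (List Bool)).ncard = 2 ^ m := by
  have e : {v : List Bool | v.length = m} ≃ List.Vector Bool m := Equiv.refl _
  rw [← Nat.card_coe_set_eq, Nat.card_congr e, Nat.card_eq_fintype_card, card_vector]
  simp

lemma period_ge {A : List Bool → List Bool} (hA : IsEndo A)
    (htrans : ∀ u v : List Bool, u.length = v.length → ∃ k, A^[k] u = v)
    {w : List Bool} {p : ℕ} (hp : 0 < p) (hfix : A^[p] w = w) : 2 ^ w.length ≤ p := by
  classical
  have hmul : ∀ q, A^[q * p] w = w := by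
    intro q
    induction q with
    | zero => simp
    | succ q ih => rw [Nat.succ_mul, Function.iterate_add_apply, hfix, ih]
  have hcover : ∀ v : List Bool, v.length = w.length → ∃ r < p, A^[r] w = v := by
    intro v hv
    obtain ⟨k, hk⟩ := htrans w v hv.symm
    refine ⟨k % p, Nat.mod_lt _ hp, ?_⟩
    have hkk : A^[k] w = A^[k % p] w := by
      conv_lhs => rw [← Nat.mod_add_div k p]
      rw [Function.iterate_add_apply, Nat.mul_comm p (k / p), hmul (k / p)]
    rw [← hk, hkk]
  have hfin : ({v : List Bool | v.length = w.length} : Set (List Bool)).Finite :=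
    List.finite_length_eq _ _
  have hsub : hfin.toFinset ⊆ (Finset.range p).image (fun r => A^[r] w) := by
    intro v hv
    rw [Set.Finite.mem_toFinset] at hv
    obtain ⟨r, hr, hrv⟩ := hcover v hv
    exact Finset.mem_image.mpr ⟨r, Finset.mem_range.mpr hr, hrv⟩
  have h1 := Finset.card_le_card hsub
  have h2 : ((Finset.range p).image (fun r => A^[r] w)).card ≤ p :=
    Finset.card_image_le.trans_eq (Finset.card_range p)
  have h3 : hfin.toFinset.card = 2 ^ w.length := by
    rw [← Set.ncard_eq_toFinset_card _ hfin, ncard_level]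
  omega

lemma iter_inj {A : List Bool → List Bool} (hA : IsEndo A) (hbij : Function.Bijective A)
    (htrans : ∀ u v : List Bool, u.length = v.length → ∃ k, A^[k] u = v)
    {w : List Bool} {i j : ℕ} (hi : i < 2 ^ w.length) (hj : j < 2 ^ w.length)
    (hij : A^[i] w = A^[j] w) : i = j := by
  have key : ∀ i j : ℕ, i ≤ j → j < 2 ^ w.length → A^[i] w = A^[j] w → i = j := by
    intro i j hle hjlt heq
    have h1 : A^[i] (A^[j - i] w) = A^[i] w := by
      rw [← Function.iterate_add_apply, Nat.add_sub_cancel' hle, heq]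
    have h2 : A^[j - i] w = w := (hbij.injective.iterate i) h1
    by_contra hne
    have hpos : 0 < j - i := by omega
    have := period_ge hA htrans hpos h2
    omega
  rcases le_total i j with h | h
  · exact key i j h hj hij
  · exact (key j i h hi hij.symm).symm

/-- For a finite-state (given by a finite Mealy automaton), bounded-activity,
level-transitive automorphism `A` of the binary tree, the set
`T_A = { A^n|_w : w ∈ X*, n ≤ 2^{|w|} }` is finite. -/
theorem stmt5 (A : List Bool → List Bool) (hA : IsEndo A) (hbij : Function.Bijective A)
    (hfs : {f | ∃ w : List Bool, f = sec A w}.Finite)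
    (hbdd : ∃ c : ℕ, ∀ n : ℕ,
      Set.ncard {w : List Bool | w.length = n ∧ sec A w ≠ id} < c)
    (htrans : ∀ u v : List Bool, u.length = v.length → ∃ k, A^[k] u = v) :
    {f | ∃ (w : List Bool) (n : ℕ), n ≤ 2 ^ w.length ∧ f = sec (A^[n]) w}.Finite := by
  classical
  obtain ⟨c, hc⟩ := hbdd
  set S : Set (List Bool → List Bool) := {f | ∃ w : List Bool, f = sec A w} with hS
  haveI : Finite ↥S := hfs
  set E : Set (List Bool → List Bool) :=
    (fun l : List ↥S => (l.map Subtype.val).foldl (fun g h => h ∘ g) id) ''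
      {l : List ↥S | l.length ≤ c} with hE
  have hEfin : E.Finite := (List.finite_length_le _ c).image _
  refine hEfin.subset ?_
  rintro f ⟨w, n, hn, rfl⟩
  set q : (List Bool → List Bool) → Bool := fun f => decide (f ≠ id) with hq
  have hqid : ∀ f, q f = false → f = id := by
    intro f hf
    by_contra h
    simp [hq, h] at hf
  set F : ℕ → (List Bool → List Bool) := fun i => sec A (A^[i] w) with hF
  set L : List (List Bool → List Bool) := (List.range n).map F with hLdef
  have hL : sec (A^[n]) w = L.foldl (fun g h => h ∘ g) id := sec_iterate hA n w
  set Lf := L.filter q with hLf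
  -- length bound for Lf
  set I := (List.range n).filter (q ∘ F) with hI
  have hmapfil : Lf = I.map F := by rw [hLf, hLdef, hI, List.filter_map]
  have hInodup : I.Nodup := (List.nodup_range (n := n)).filter _
  have hImem : ∀ i ∈ I, i < n := by
    intro i hi
    have := (List.mem_filter.mp hi).1
    exact List.mem_range.mp this
  set J := I.map (fun i => A^[i] w) with hJ
  have hJnodup : J.Nodup := by
    refine List.Nodup.map_on ?_ hInodup
    intro i hi j hj hijw
    exact iter_inj hA hbij htrans (lt_of_lt_of_le (hImem i hi) hn)
      (lt_of_lt_of_le (hImem j hj) hn) hijw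
  set B : Set (List Bool) := {v : List Bool | v.length = w.length ∧ sec A v ≠ id} with hB
  have hBfin : B.Finite := (List.finite_length_eq Bool w.length).subset fun v hv => hv.1
  have hJmem : ∀ v ∈ J, v ∈ B := by
    intro v hv
    obtain ⟨i, hi, rfl⟩ := List.mem_map.mp hv
    refine ⟨(endo_iterate hA i).1 w, ?_⟩
    have := (List.mem_filter.mp hi).2
    simpa [hq, hF] using this
  have hJlen : J.length ≤ B.ncard := length_le_ncard hJnodup hBfin hJmem
  have hLflen : Lf.length ≤ c := by
    have h1 : Lf.length = I.length := by rw [hmapfil, List.length_map]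
    have h2 : J.length = I.length := by rw [hJ, List.length_map]
    have h3 := hc w.length
    rw [← hB] at h3
    omega
  -- Lf entries lie in S
  have hLfS : ∀ f ∈ Lf, f ∈ S := by
    intro f hf
    have : f ∈ L := List.mem_of_mem_filter hf
    obtain ⟨i, _, rfl⟩ := List.mem_map.mp this
    exact ⟨A^[i] w, rfl⟩
  set l' : List ↥S := Lf.attach.map (fun x => (⟨x.1, hLfS x.1 x.2⟩ : ↥S)) with hl'
  refine ⟨l', ?_, ?_⟩
  · show l'.length ≤ c
    rw [hl', List.length_map, List.length_attach]
    exact hLflen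
  · have hval : l'.map Subtype.val = Lf := by
      rw [hl', List.map_map]
      exact List.attach_map_subtype_val Lf
    show (l'.map Subtype.val).foldl (fun g h => h ∘ g) id = sec (A^[n]) w
    rw [hval, hLf, foldl_filter q hqid L id, ← hL]
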